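/- With all nonnegativity constraints ξ_{j+3} ≥ 0 and the derivative constraint ξ_2 + sum_j c_j ξ_{j+3} ≤ 0 holding with c_j = ψ_j(1), the function f_ξ(x) = ξ_1 + ξ_2 x + sum_j ξ_{j+3} φ_j(x) is convex and nonincreasing on [0,1]. -/

import Mathlib

open MeasureTheory

/-- Hat basis function `h_j` on the grid `x_j = j/N`. -/
noncomputable def hat (N j : ℕ) (x : ℝ) : ℝ := max 0 (1 - N * |x - (j : ℝ) / N|)

/-- First antiderivative `ψ_j(x) = ∫_0^x h_j(t) dt`. -/
noncomputable def psi (N j : ℕ) (x : ℝ) : ℝ := ∫ t in (0 : ℝ)..x, hat N j t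

/-- Second antiderivative `φ_j(x) = ∫_0^x ψ_j(t) dt`. -/
noncomputable def phi (N j : ℕ) (x : ℝ) : ℝ := ∫ t in (0 : ℝ)..x, psi N j t

lemma hat_cont (N j : ℕ) : Continuous (hat N j) := by
  unfold hat; fun_prop

lemma hat_nonneg (N j : ℕ) (x : ℝ) : 0 ≤ hat N j x := le_max_left _ _

lemma psi_hasDerivAt (N j : ℕ) (x : ℝ) : HasDerivAt (psi N j) (hat N j x) x :=
  ((hat_cont N j).integral_hasStrictDerivAt 0 x).hasDerivAt

lemma psi_cont (N j : ℕ) : Continuous (psi N j) :=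
  continuous_iff_continuousAt.2 fun x => (psi_hasDerivAt N j x).continuousAt

lemma psi_mono (N j : ℕ) : Monotone (psi N j) := by
  intro a b hab
  have h : psi N j b - psi N j a = ∫ t in a..b, hat N j t := by
    rw [psi, psi, ← intervalIntegral.integral_interval_sub_left
      (((hat_cont N j).intervalIntegrable 0 b)) (((hat_cont N j).intervalIntegrable 0 a))]
  have hnn : 0 ≤ ∫ t in a..b, hat N j t :=
    intervalIntegral.integral_nonneg hab fun u _ => hat_nonneg N j u
  linarith [h ▸ hnn]

lemma phi_hasDerivAt (N j : ℕ) (x : ℝ) : HasDerivAt (phi N j) (psi N j x) x :=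
  ((psi_cont N j).integral_hasStrictDerivAt 0 x).hasDerivAt

/-- Under the nonnegativity and derivative constraints, `f_ξ` is convex and
nonincreasing on `[0,1]`. -/
theorem constrained_model_convex_antitone (N : ℕ) (hN : 1 ≤ N)
    (ξ₁ ξ₂ : ℝ) (ξ : ℕ → ℝ) (hpos : ∀ j ≤ N, 0 ≤ ξ (j + 3))
    (hslope : ξ₂ + ∑ j ∈ Finset.range (N + 1), psi N j 1 * ξ (j + 3) ≤ 0) :
    ConvexOn ℝ (Set.Icc (0 : ℝ) 1)
        (fun x => ξ₁ + ξ₂ * x + ∑ j ∈ Finset.range (N + 1), ξ (j + 3) * phi N j x) ∧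
      AntitoneOn
        (fun x => ξ₁ + ξ₂ * x + ∑ j ∈ Finset.range (N + 1), ξ (j + 3) * phi N j x)
        (Set.Icc (0 : ℝ) 1) := by
  set f : ℝ → ℝ :=
    fun x => ξ₁ + ξ₂ * x + ∑ j ∈ Finset.range (N + 1), ξ (j + 3) * phi N j x with hf
  set g : ℝ → ℝ :=
    fun x => ξ₂ + ∑ j ∈ Finset.range (N + 1), ξ (j + 3) * psi N j x with hg
  have hderiv : ∀ x, HasDerivAt f (g x) x := by
    intro x
    have h1 : HasDerivAt (fun x => ξ₁ + ξ₂ * x) ξ₂ x := by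
      simpa using ((hasDerivAt_id x).const_mul ξ₂).const_add ξ₁
    have h2 : HasDerivAt (fun x => ∑ j ∈ Finset.range (N + 1), ξ (j + 3) * phi N j x)
        (∑ j ∈ Finset.range (N + 1), ξ (j + 3) * psi N j x) x := by
      apply HasDerivAt.fun_sum
      intro j _
      exact (phi_hasDerivAt N j x).const_mul _
    simpa [hf, hg, add_assoc] using h1.fun_add h2
  have hposj : ∀ j ∈ Finset.range (N + 1), 0 ≤ ξ (j + 3) := fun j hj =>
    hpos j (Nat.lt_succ_iff.mp (Finset.mem_range.mp hj))
  have hgmono : Monotone g := by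
    intro a b hab
    apply add_le_add_right
    apply Finset.sum_le_sum
    intro j hj
    exact mul_le_mul_of_nonneg_left (psi_mono N j hab) (hposj j hj)
  have hcont : Continuous f :=
    continuous_iff_continuousAt.2 fun x => (hderiv x).continuousAt
  have hdf : deriv f = g := funext fun x => (hderiv x).deriv
  have hdiff : DifferentiableOn ℝ f (interior (Set.Icc (0 : ℝ) 1)) :=
    fun x _ => (hderiv x).differentiableAt.differentiableWithinAt
  have hg1 : g 1 ≤ 0 := by
    have : ∑ j ∈ Finset.range (N + 1), ξ (j + 3) * psi N j 1
        = ∑ j ∈ Finset.range (N + 1), psi N j 1 * ξ (j + 3) :=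
      Finset.sum_congr rfl fun j _ => mul_comm _ _
    simpa [hg, this] using hslope
  constructor
  · exact MonotoneOn.convexOn_of_deriv (convex_Icc 0 1) hcont.continuousOn hdiff
      (hdf ▸ hgmono.monotoneOn _)
  · apply antitoneOn_of_deriv_nonpos (convex_Icc 0 1) hcont.continuousOn hdiff
    intro x hx
    rw [hdf]
    have hx1 : x ≤ 1 := by
      rw [interior_Icc] at hx
      exact hx.2.le
    exact (hgmono hx1).trans hg1
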